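/- The characteristic polynomial of the matrix A_N equals χ_N(λ) = U_{N+1}(-λ/2) · Π_{i=0}^{N-1} ( U_i(-λ/2) )^{2^{N-i-1}} for all N ≥ 1, where U_k is the Chebyshev polynomial of the second kind of degree k. -/

import Mathlib

open Matrix Polynomial

/-- `J_k = diag(1,0,...,0)` of order `2^k`. -/
noncomputable def Jmat (k : ℕ) : Matrix (Fin (2 ^ k)) (Fin (2 ^ k)) ℝ :=
  Matrix.diagonal (fun i => if (i : ℕ) = 0 then 1 else 0)

/-- `J_k' = diag(0,...,0,1)` of order `2^k`. -/
noncomputable def Jmat' (k : ℕ) : Matrix (Fin (2 ^ k)) (Fin (2 ^ k)) ℝ :=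
  Matrix.diagonal (fun i => if (i : ℕ) = 2 ^ k - 1 then 1 else 0)

/-- The equivalence identifying `Fin (2^k) ⊕ Fin (2^k)` with `Fin (2^(k+1))`. -/
def blockEquiv (k : ℕ) : Fin (2 ^ k) ⊕ Fin (2 ^ k) ≃ Fin (2 ^ (k + 1)) :=
  finSumFinEquiv.trans (finCongr (by rw [pow_succ, mul_two]))

/-- The adjacency matrices `A_k`, defined recursively by `A_0 = (0)` and
`A_{k+1} = [[A_k, J_k], [J_k', A_k]]` in block form. -/
noncomputable def Amat : (k : ℕ) → Matrix (Fin (2 ^ k)) (Fin (2 ^ k)) ℝ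
  | 0 => 0
  | (k + 1) => Matrix.reindex (blockEquiv k) (blockEquiv k)
      (Matrix.fromBlocks (Amat k) (Jmat k) (Jmat' k) (Amat k))

/-- `T_k = A_k - λ I`. -/
noncomputable def Tmat (k : ℕ) (l : ℝ) : Matrix (Fin (2 ^ k)) (Fin (2 ^ k)) ℝ :=
  Amat k - l • 1

/-- Characteristic polynomial value `χ_k(λ) = det (A_k - λ I)`. -/
noncomputable def chiA (k : ℕ) (l : ℝ) : ℝ := (Tmat k l).det

/-- Submatrix obtained by deleting the top row and the rightmost column. -/
noncomputable def delTopRight {n : ℕ} (M : Matrix (Fin n) (Fin n) ℝ) :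
    Matrix (Fin (n - 1)) (Fin (n - 1)) ℝ :=
  Matrix.of fun i j => M ⟨i.1 + 1, by have := i.isLt; omega⟩ ⟨j.1, by have := j.isLt; omega⟩

/-- Submatrix obtained by deleting the bottom row and the rightmost column. -/
noncomputable def delBotRight {n : ℕ} (M : Matrix (Fin n) (Fin n) ℝ) :
    Matrix (Fin (n - 1)) (Fin (n - 1)) ℝ :=
  Matrix.of fun i j => M ⟨i.1, by have := i.isLt; omega⟩ ⟨j.1, by have := j.isLt; omega⟩

/-- `φ_k = det Q_k`, where `Q_k` is `T_k` with top row and right column deleted. -/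
noncomputable def phiA (k : ℕ) (l : ℝ) : ℝ := (delTopRight (Tmat k l)).det

/-- `ψ_k = det P_k`, where `P_k` is `T_k` with bottom row and right column deleted. -/
noncomputable def psiA (k : ℕ) (l : ℝ) : ℝ := (delBotRight (Tmat k l)).det


/-- minor dropping row `i` and column `j`. -/
noncomputable def dropMinor {n : ℕ} (M : Matrix (Fin n) (Fin n) ℝ) (i j : Fin n) :
    Matrix (Fin (n - 1)) (Fin (n - 1)) ℝ :=
  Matrix.of fun a b =>
    M ⟨if a.1 < i.1 then a.1 else a.1 + 1, by have := a.isLt; split <;> omega⟩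
      ⟨if b.1 < j.1 then b.1 else b.1 + 1, by have := b.isLt; split <;> omega⟩

lemma succAbove_val {n : ℕ} (p : Fin (n+1)) (a : Fin n) :
    (p.succAbove a).1 = if a.1 < p.1 then a.1 else a.1 + 1 := by
  rcases Nat.lt_or_ge a.1 p.1 with h | h
  · rw [if_pos h, Fin.succAbove, if_pos (by simp [Fin.lt_def]; omega)]
    rfl
  · rw [if_neg (by omega), Fin.succAbove, if_neg (by simp [Fin.lt_def]; omega)]
    rfl

lemma det_row_single {n : ℕ} (M : Matrix (Fin n) (Fin n) ℝ) (i j : Fin n)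
    (h : M i = Pi.single j 1) :
    M.det = (-1) ^ (i.1 + j.1) * (dropMinor M i j).det := by
  rcases n with _ | n
  · exact absurd i.isLt (by omega)
  rw [Matrix.det_succ_row M i, Finset.sum_eq_single j]
  · have h1 : M i j = 1 := by rw [h]; simp
    rw [h1, mul_one]
    have hsub : (M.submatrix i.succAbove j.succAbove) = dropMinor M i j := by
      ext a b
      simp only [Matrix.submatrix_apply, dropMinor, Matrix.of_apply]
      congr 1 <;> exact Fin.ext (by rw [succAbove_val])
    rw [hsub]
  · intro b _ hb
    have : M i b = 0 := by rw [h, Pi.single_apply, if_neg hb]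
    rw [this, mul_zero, zero_mul]
  · intro hj; exact absurd (Finset.mem_univ j) hj

lemma det_split {p q n : ℕ} (hpq : p + q = n) (M : Matrix (Fin n) (Fin n) ℝ)
    (hz : ∀ i j : Fin n, p ≤ i.1 → j.1 < p → M i j = 0) :
    M.det = (Matrix.of fun i j : Fin p => M ⟨i.1, by omega⟩ ⟨j.1, by omega⟩).det *
            (Matrix.of fun i j : Fin q => M ⟨p + i.1, by omega⟩ ⟨p + j.1, by omega⟩).det := by
  set e : Fin p ⊕ Fin q ≃ Fin n := finSumFinEquiv.trans (finCongr hpq) with he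
  have hval1 : ∀ x : Fin p, (e (Sum.inl x)).1 = x.1 := by
    intro x; simp [he]
  have hval2 : ∀ x : Fin q, (e (Sum.inr x)).1 = p + x.1 := by
    intro x; simp [he]
  rw [← Matrix.det_submatrix_equiv_self e M]
  have hfb : M.submatrix e e = Matrix.fromBlocks
      (Matrix.of fun i j : Fin p => M ⟨i.1, by have := i.isLt; omega⟩ ⟨j.1, by have := j.isLt; omega⟩)
      (Matrix.of fun (i : Fin p) (j : Fin q) => M (e (Sum.inl i)) (e (Sum.inr j)))
      0
      (Matrix.of fun i j : Fin q => M ⟨p + i.1, by have := i.isLt; omega⟩ ⟨p + j.1, by have := j.isLt; omega⟩) := by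
    ext a b
    cases a with
    | inl a =>
      cases b with
      | inl b =>
        simp only [Matrix.submatrix_apply, Matrix.fromBlocks_apply₁₁, Matrix.of_apply]
        congr 1 <;> exact Fin.ext (by simp [hval1])
      | inr b =>
        simp only [Matrix.submatrix_apply, Matrix.fromBlocks_apply₁₂, Matrix.of_apply]
    | inr a =>
      cases b with
      | inl b =>
        simp only [Matrix.submatrix_apply, Matrix.fromBlocks_apply₂₁, Matrix.zero_apply]
        exact hz _ _ (by rw [hval2]; omega) (by rw [hval1]; exact b.isLt)
      | inr b =>
        simp only [Matrix.submatrix_apply, Matrix.fromBlocks_apply₂₂, Matrix.of_apply]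
        congr 1 <;> exact Fin.ext (by simp [hval2])
  rw [hfb, Matrix.det_fromBlocks_zero₂₁]



section Entries

lemma blockEquiv_inl_val {k : ℕ} (a : Fin (2^k)) : ((blockEquiv k) (Sum.inl a)).1 = a.1 := by
  simp [blockEquiv]

lemma blockEquiv_inr_val {k : ℕ} (a : Fin (2^k)) : ((blockEquiv k) (Sum.inr a)).1 = 2^k + a.1 := by
  simp [blockEquiv]
  omega

lemma blockEquiv_symm_lt {k : ℕ} (i : Fin (2^(k+1))) (h : i.1 < 2^k) :
    (blockEquiv k).symm i = Sum.inl ⟨i.1, h⟩ := by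
  rw [Equiv.symm_apply_eq]
  exact Fin.ext (blockEquiv_inl_val _).symm

lemma pow_succ_two (k : ℕ) : (2:ℕ)^(k+1) = 2 * 2^k := by rw [pow_succ]; ring

lemma blockEquiv_symm_ge {k : ℕ} (i : Fin (2^(k+1))) (h : 2^k ≤ i.1) :
    (blockEquiv k).symm i = Sum.inr ⟨i.1 - 2^k, by have := i.isLt; have := pow_succ_two k; omega⟩ := by
  rw [Equiv.symm_apply_eq]
  refine Fin.ext ?_
  rw [blockEquiv_inr_val]
  show i.1 = 2^k + (i.1 - 2^k)
  omega

lemma Amat_succ_eq (k : ℕ) : Amat (k+1) = Matrix.reindex (blockEquiv k) (blockEquiv k)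
      (Matrix.fromBlocks (Amat k) (Jmat k) (Jmat' k) (Amat k)) := rfl

lemma Amat_11 {k : ℕ} (i j : Fin (2^(k+1))) (hi : i.1 < 2^k) (hj : j.1 < 2^k) :
    Amat (k+1) i j = Amat k ⟨i.1, hi⟩ ⟨j.1, hj⟩ := by
  rw [Amat_succ_eq, Matrix.reindex_apply, Matrix.submatrix_apply,
    blockEquiv_symm_lt i hi, blockEquiv_symm_lt j hj, Matrix.fromBlocks_apply₁₁]

lemma Amat_12 {k : ℕ} (i j : Fin (2^(k+1))) (hi : i.1 < 2^k) (hj : 2^k ≤ j.1) :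
    Amat (k+1) i j = if i.1 = 0 ∧ j.1 = 2^k then 1 else 0 := by
  rw [Amat_succ_eq, Matrix.reindex_apply, Matrix.submatrix_apply,
    blockEquiv_symm_lt i hi, blockEquiv_symm_ge j hj, Matrix.fromBlocks_apply₁₂]
  rw [Jmat, Matrix.diagonal_apply]
  have := j.isLt
  have hp := pow_succ_two k
  simp only [Fin.mk.injEq]
  split_ifs <;> simp_all <;> omega

lemma Amat_21 {k : ℕ} (i j : Fin (2^(k+1))) (hi : 2^k ≤ i.1) (hj : j.1 < 2^k) :
    Amat (k+1) i j = if i.1 = 2^(k+1) - 1 ∧ j.1 = 2^k - 1 then 1 else 0 := by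
  rw [Amat_succ_eq, Matrix.reindex_apply, Matrix.submatrix_apply,
    blockEquiv_symm_ge i hi, blockEquiv_symm_lt j hj, Matrix.fromBlocks_apply₂₁]
  rw [Jmat', Matrix.diagonal_apply]
  have := i.isLt
  have := pow_succ_two k
  have hm : 1 ≤ (2:ℕ)^k := Nat.one_le_two_pow
  simp only [Fin.mk.injEq]
  split_ifs <;> simp_all <;> omega

lemma Amat_22 {k : ℕ} (i j : Fin (2^(k+1))) (hi : 2^k ≤ i.1) (hj : 2^k ≤ j.1) :
    Amat (k+1) i j = Amat k ⟨i.1 - 2^k, by have := i.isLt; have := pow_succ_two k; omega⟩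
      ⟨j.1 - 2^k, by have := j.isLt; have := pow_succ_two k; omega⟩ := by
  rw [Amat_succ_eq, Matrix.reindex_apply, Matrix.submatrix_apply,
    blockEquiv_symm_ge i hi, blockEquiv_symm_ge j hj, Matrix.fromBlocks_apply₂₂]

lemma Tmat_apply {k : ℕ} (l : ℝ) (i j : Fin (2^k)) :
    Tmat k l i j = Amat k i j - (if i = j then l else 0) := by
  rw [Tmat, Matrix.sub_apply, Matrix.smul_apply, Matrix.one_apply]
  split_ifs <;> simp

lemma Tmat_11 {k : ℕ} (l : ℝ) (i j : Fin (2^(k+1))) (hi : i.1 < 2^k) (hj : j.1 < 2^k) :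
    Tmat (k+1) l i j = Tmat k l ⟨i.1, hi⟩ ⟨j.1, hj⟩ := by
  rw [Tmat_apply, Tmat_apply, Amat_11 i j hi hj]
  congr 1
  simp only [Fin.ext_iff, Fin.mk.injEq]

lemma Tmat_12 {k : ℕ} (l : ℝ) (i j : Fin (2^(k+1))) (hi : i.1 < 2^k) (hj : 2^k ≤ j.1) :
    Tmat (k+1) l i j = if i.1 = 0 ∧ j.1 = 2^k then 1 else 0 := by
  rw [Tmat_apply, Amat_12 i j hi hj, if_neg (show ¬ i = j from fun hc => by
    have : i.1 = j.1 := congrArg Fin.val hc; omega), sub_zero]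

lemma Tmat_21 {k : ℕ} (l : ℝ) (i j : Fin (2^(k+1))) (hi : 2^k ≤ i.1) (hj : j.1 < 2^k) :
    Tmat (k+1) l i j = if i.1 = 2^(k+1) - 1 ∧ j.1 = 2^k - 1 then 1 else 0 := by
  rw [Tmat_apply, Amat_21 i j hi hj, if_neg (show ¬ i = j from fun hc => by
    have : i.1 = j.1 := congrArg Fin.val hc; omega), sub_zero]

lemma Tmat_22 {k : ℕ} (l : ℝ) (i j : Fin (2^(k+1))) (hi : 2^k ≤ i.1) (hj : 2^k ≤ j.1) :
    Tmat (k+1) l i j = Tmat k l ⟨i.1 - 2^k, by have := i.isLt; have := pow_succ_two k; omega⟩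
      ⟨j.1 - 2^k, by have := j.isLt; have := pow_succ_two k; omega⟩ := by
  rw [Tmat_apply, Tmat_apply, Amat_22 i j hi hj]
  have h1 := i.isLt
  have hp := pow_succ_two k
  congr 1
  simp only [Fin.ext_iff, Fin.mk.injEq]
  split_ifs <;> first | rfl | omega

end Entries


section Centro

lemma Amat_centro (k : ℕ) (i j : Fin (2^k)) :
    Amat k ⟨2^k - 1 - i.1, by have := i.isLt; omega⟩ ⟨2^k - 1 - j.1, by have := j.isLt; omega⟩
      = Amat k i j := by
  induction k with
  | zero =>
    congr 1 <;> apply Fin.ext <;> (have := i.isLt; have := j.isLt; simp; try omega)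
  | succ k ih =>
    have hi := i.isLt
    have hj := j.isLt
    have hp := pow_succ_two k
    have hm : 1 ≤ (2:ℕ)^k := Nat.one_le_two_pow
    rcases Nat.lt_or_ge i.1 (2^k) with h1 | h1 <;> rcases Nat.lt_or_ge j.1 (2^k) with h2 | h2
    · rw [Amat_11 i j h1 h2, Amat_22 _ _ (by simp; omega) (by simp; omega)]
      have := ih ⟨i.1, h1⟩ ⟨j.1, h2⟩
      convert this using 3 <;> simp <;> omega
    · rw [Amat_12 i j h1 h2, Amat_21 _ _ (by simp; omega) (by simp; omega)]
      simp only []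
      congr 1
      simp only [eq_iff_iff]
      constructor <;> rintro ⟨ha, hb⟩ <;> constructor <;> simp_all [-Fin.val_eq_zero_iff] <;> omega
    · rw [Amat_21 i j h1 h2, Amat_12 _ _ (by simp; omega) (by simp; omega)]
      congr 1
      simp only [eq_iff_iff]
      constructor <;> rintro ⟨ha, hb⟩ <;> constructor <;> simp_all <;> omega
    · rw [Amat_22 i j h1 h2, Amat_11 _ _ (by simp; omega) (by simp; omega)]
      have := ih ⟨i.1 - 2^k, by omega⟩ ⟨j.1 - 2^k, by omega⟩
      convert this using 3 <;> simp <;> omega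

lemma Tmat_centro (k : ℕ) (l : ℝ) (i j : Fin (2^k)) :
    Tmat k l ⟨2^k - 1 - i.1, by have := i.isLt; omega⟩ ⟨2^k - 1 - j.1, by have := j.isLt; omega⟩
      = Tmat k l i j := by
  rw [Tmat_apply, Tmat_apply, Amat_centro]
  have := i.isLt
  have := j.isLt
  congr 1
  simp only [Fin.ext_iff, Fin.mk.injEq, eq_iff_iff]
  split_ifs <;> first | rfl | omega

/-- `φ'_k`: delete bottom row and left column. -/
noncomputable def phiA' (k : ℕ) (l : ℝ) : ℝ :=
  (Matrix.of fun i j : Fin (2^k - 1) =>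
    Tmat k l ⟨i.1, by have := i.isLt; omega⟩ ⟨j.1 + 1, by have := j.isLt; omega⟩).det

lemma phiA'_eq (k : ℕ) (l : ℝ) : phiA' k l = phiA k l := by
  rw [phiA', phiA]
  rw [← Matrix.det_submatrix_equiv_self (Fin.revPerm) (delTopRight (Tmat k l))]
  congr 1
  ext a b
  have ha := a.isLt
  have hb := b.isLt
  simp only [Matrix.submatrix_apply, Matrix.of_apply, delTopRight, Fin.revPerm_apply]
  have := Tmat_centro k l ⟨a.1, by omega⟩ ⟨b.1 + 1, by omega⟩
  rw [← this]
  congr 1 <;> simp [Fin.ext_iff, Fin.rev] <;> omega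

end Centro

section Base

lemma chiA_zero (l : ℝ) : chiA 0 l = -l := by
  have e : Fin 1 ≃ Fin (2^0) := finCongr (by norm_num)
  rw [chiA, ← Matrix.det_submatrix_equiv_self e, Matrix.det_fin_one]
  rw [Matrix.submatrix_apply, Tmat_apply, if_pos rfl]
  have : Amat 0 = 0 := rfl
  rw [this]
  simp

lemma phiA_zero (l : ℝ) : phiA 0 l = 1 := by
  have e : Fin 0 ≃ Fin (2^0 - 1) := finCongr (by norm_num)
  rw [phiA, ← Matrix.det_submatrix_equiv_self e, Matrix.det_fin_zero]

lemma psiA_zero (l : ℝ) : psiA 0 l = 1 := by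
  have e : Fin 0 ≃ Fin (2^0 - 1) := finCongr (by norm_num)
  rw [psiA, ← Matrix.det_submatrix_equiv_self e, Matrix.det_fin_zero]

end Base


section Recursions

lemma finvmk {n x : ℕ} (h : x < n) : (⟨x, h⟩ : Fin n).1 = x := rfl

lemma Tmat_congr {k : ℕ} {l : ℝ} {x y x' y' : Fin (2^k)} (hx : x.1 = x'.1) (hy : y.1 = y'.1) :
    Tmat k l x y = Tmat k l x' y' := by
  rw [Fin.ext hx, Fin.ext hy]

lemma Tmat_21_ne {k : ℕ} (l : ℝ) (i j : Fin (2^(k+1))) (hi : 2^k ≤ i.1) (hj : j.1 < 2^k)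
    (hne : i.1 ≠ 2^(k+1) - 1) : Tmat (k+1) l i j = 0 := by
  rw [Tmat_21 l i j hi hj, if_neg (fun h => hne h.1)]

lemma Tmat_12_ne {k : ℕ} (l : ℝ) (i j : Fin (2^(k+1))) (hi : i.1 < 2^k) (hj : 2^k ≤ j.1)
    (hne : ¬(i.1 = 0 ∧ j.1 = 2^k)) : Tmat (k+1) l i j = 0 := by
  rw [Tmat_12 l i j hi hj, if_neg hne]

lemma psiA_succ (k : ℕ) (l : ℝ) : psiA (k+1) l = chiA k l * psiA k l := by
  have hp := pow_succ_two k
  have hm : 1 ≤ (2:ℕ)^k := Nat.one_le_two_pow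
  rw [psiA, det_split (p := 2^k) (q := 2^k - 1) (by omega) _ ?hz]
  case hz =>
    intro i j hgei hltj
    have hi := i.isLt
    have hj := j.isLt
    exact Tmat_21_ne l ⟨i.1, by omega⟩ ⟨j.1, by omega⟩ hgei hltj
      (show i.1 ≠ 2^(k+1) - 1 by omega)
  congr 1
  · rw [chiA]
    congr 1
    ext a b
    have ha := a.isLt
    have hb := b.isLt
    exact Tmat_11 l ⟨a.1, by omega⟩ ⟨b.1, by omega⟩ a.isLt b.isLt
  · rw [psiA]
    congr 1
    ext a b
    have ha := a.isLt
    have hb := b.isLt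
    have h22 := Tmat_22 l (k := k) ⟨2^k + a.1, by omega⟩ ⟨2^k + b.1, by omega⟩
      (show 2^k ≤ 2^k + a.1 from Nat.le_add_right _ _)
      (show 2^k ≤ 2^k + b.1 from Nat.le_add_right _ _)
    rw [show ((Matrix.of fun i j : Fin (2^k - 1) =>
        delBotRight (Tmat (k+1) l) ⟨2^k + i.1, by have := i.isLt; omega⟩
          ⟨2^k + j.1, by have := j.isLt; omega⟩) a b : ℝ)
      = Tmat (k+1) l ⟨2^k + a.1, by omega⟩ ⟨2^k + b.1, by omega⟩ from rfl, h22]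
    exact Tmat_congr (by simp only [finvmk]; omega) (by simp only [finvmk]; omega)

end Recursions


section PhiRec

/-- the cycle permutation moving the last row up to position `m-1`. -/
def cyclePerm (m n1 : ℕ) (h : n1 + 1 = 2 * m) (hm : 1 ≤ m) : Equiv.Perm (Fin n1) where
  toFun i := if i.1 < m - 1 then i else if i.1 = m - 1 then ⟨n1 - 1, by omega⟩
    else ⟨i.1 - 1, by have := i.isLt; omega⟩
  invFun j := if j.1 < m - 1 then j else if h2 : j.1 = n1 - 1 then ⟨m - 1, by omega⟩
    else ⟨j.1 + 1, by have := j.isLt; omega⟩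
  left_inv := by
    intro i
    have hi := i.isLt
    apply Fin.ext
    simp only [apply_ite Fin.val, apply_dite Fin.val, finvmk]
    split_ifs <;> omega
  right_inv := by
    intro j
    have hj := j.isLt
    apply Fin.ext
    simp only [apply_ite Fin.val, apply_dite Fin.val, finvmk]
    split_ifs <;> omega

lemma cyclePerm_val {m n1 : ℕ} (h : n1 + 1 = 2 * m) (hm : 1 ≤ m) (i : Fin n1) :
    ((cyclePerm m n1 h hm) i).1 = if i.1 < m - 1 then i.1 else if i.1 = m - 1 then n1 - 1
      else i.1 - 1 := by
  unfold cyclePerm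
  simp only [Equiv.coe_fn_mk, apply_ite Fin.val, apply_dite Fin.val, finvmk]

set_option maxHeartbeats 400000 in
lemma phiA_succ_sq (k : ℕ) (l : ℝ) :
    (phiA (k+1) l)^2 = (phiA k l * psiA k l)^2 := by
  have hp := pow_succ_two k
  have hm : 1 ≤ (2:ℕ)^k := Nat.one_le_two_pow
  set N := delTopRight (Tmat (k+1) l) with hN
  have hn1 : 2^(k+1) - 1 + 1 = 2 * 2^k := by omega
  set σ : Equiv.Perm (Fin (2^(k+1) - 1)) := cyclePerm (2^k) (2^(k+1) - 1) hn1 hm with hσ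
  have hσval : ∀ i : Fin (2^(k+1) - 1), (σ i).1 = if i.1 < 2^k - 1 then i.1
      else if i.1 = 2^k - 1 then 2^(k+1) - 1 - 1 else i.1 - 1 := fun i => cyclePerm_val hn1 hm i
  have hρlt : ∀ i : Fin (2^(k+1) - 1),
      (if i.1 < 2^k - 1 then i.1 + 1 else if i.1 = 2^k - 1 then 2^(k+1) - 1 else i.1) < 2^(k+1) := by
    intro i; have := i.isLt; split_ifs <;> omega
  set W : Matrix (Fin (2^(k+1) - 1)) (Fin (2^(k+1) - 1)) ℝ := Matrix.of fun i j =>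
    Tmat (k+1) l
      ⟨if i.1 < 2^k - 1 then i.1 + 1 else if i.1 = 2^k - 1 then 2^(k+1) - 1 else i.1, hρlt i⟩
      ⟨j.1, by have := j.isLt; omega⟩ with hW
  have hWe : ∀ (i' j' : Fin (2^(k+1) - 1)) (x y : Fin (2^(k+1))),
      ((if i'.1 < 2^k - 1 then i'.1 + 1 else if i'.1 = 2^k - 1 then 2^(k+1) - 1 else i'.1) = x.1) →
      (j'.1 = y.1) → W i' j' = Tmat (k+1) l x y := by
    intro i' j' x y hx hy
    rw [hW]
    exact Tmat_congr (by simp only [finvmk]; exact hx) (by simp only [finvmk]; exact hy)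
  have hWdet : W.det = phiA k l * psiA k l := by
    rw [det_split (p := 2^k) (q := 2^k - 1) (by omega) _ ?hz]
    case hz =>
      intro i j hgei hltj
      have hi := i.isLt
      have hj := j.isLt
      rw [hWe i j ⟨i.1, by omega⟩ ⟨j.1, by omega⟩ (by simp only [finvmk]; split_ifs <;> omega) rfl]
      exact Tmat_21_ne l _ _ (show 2^k ≤ i.1 from hgei) (show j.1 < 2^k from hltj)
        (show i.1 ≠ 2^(k+1) - 1 by omega)
    congr 1
    · -- top-left block has determinant phiA k l
      rw [det_row_single _ ⟨2^k - 1, by omega⟩ ⟨2^k - 1, by omega⟩ ?hrow]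
      case hrow =>
        funext j
        have hj := j.isLt
        show W ⟨2^k - 1, by omega⟩ ⟨j.1, by omega⟩ = _
        rw [hWe ⟨2^k - 1, by omega⟩ ⟨j.1, by omega⟩ ⟨2^(k+1) - 1, by omega⟩ ⟨j.1, by omega⟩
            (by simp only [finvmk]; split_ifs <;> omega) rfl,
          Tmat_21 l ⟨2^(k+1) - 1, by omega⟩ ⟨j.1, by omega⟩
            (show 2^k ≤ 2^(k+1) - 1 by omega) (show j.1 < 2^k from hj)]
        simp only [Pi.single_apply, Fin.ext_iff, finvmk, true_and]
      · simp only [finvmk]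
        have heven : (-1:ℝ)^((2^k - 1) + (2^k - 1)) = 1 := Even.neg_one_pow ⟨2^k - 1, rfl⟩
        rw [heven, one_mul, phiA]
        refine congrArg Matrix.det ?_
        ext a b
        have ha := a.isLt
        have hb := b.isLt
        simp only [dropMinor, Matrix.of_apply]
        refine (hWe _ _ ⟨a.1 + 1, by omega⟩ ⟨b.1, by omega⟩ ?h1 ?h2).trans ?h3
        case h1 => simp only [finvmk]; split_ifs <;> omega
        case h2 => simp only [finvmk]; split_ifs <;> omega
        case h3 =>
          rw [Tmat_11 l ⟨a.1 + 1, by omega⟩ ⟨b.1, by omega⟩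
            (show a.1 + 1 < 2^k by omega) (show b.1 < 2^k by omega)]
          exact Tmat_congr (by simp only [finvmk]) (by simp only [finvmk])
    · rw [psiA]
      refine congrArg Matrix.det ?_
      ext a b
      have ha := a.isLt
      have hb := b.isLt
      simp only [Matrix.of_apply]
      refine (hWe _ _ ⟨2^k + a.1, by omega⟩ ⟨2^k + b.1, by omega⟩ ?g1 ?g2).trans ?g3
      case g1 => simp only [finvmk]; split_ifs <;> omega
      case g2 => simp only [finvmk]
      case g3 =>
        rw [Tmat_22 l ⟨2^k + a.1, by omega⟩ ⟨2^k + b.1, by omega⟩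
          (show 2^k ≤ 2^k + a.1 from Nat.le_add_right _ _)
          (show 2^k ≤ 2^k + b.1 from Nat.le_add_right _ _)]
        exact Tmat_congr (by simp only [finvmk]; omega) (by simp only [finvmk]; omega)
  have hsub2 : N.submatrix σ id = W := by
    ext i j
    have hi := i.isLt
    have hj := j.isLt
    have hv := hσval i
    show Tmat (k+1) l ⟨(σ i).1 + 1, by have := (σ i).isLt; omega⟩ ⟨j.1, by omega⟩ = W i j
    refine ((hWe i j ⟨(σ i).1 + 1, by have := (σ i).isLt; omega⟩ ⟨j.1, by omega⟩ ?_ rfl)).symm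
    simp only [finvmk]
    split_ifs at hv ⊢ <;> omega
  have hperm := Matrix.det_permute σ N
  rw [hsub2, hWdet] at hperm
  have hphi : phiA (k+1) l = N.det := rfl
  rcases Int.units_eq_one_or (Equiv.Perm.sign σ) with hs | hs <;> rw [hs] at hperm <;>
      push_cast at hperm <;> rw [hphi]
  · rw [show N.det = phiA k l * psiA k l from by linarith]
  · rw [show N.det = -(phiA k l * psiA k l) from by linarith]
    ring

end PhiRec

lemma det_split' {p q n : ℕ} (hpq : p + q = n) (M : Matrix (Fin n) (Fin n) ℝ)
    (hz : ∀ i j : Fin n, i.1 < p → p ≤ j.1 → M i j = 0) :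
    M.det = (Matrix.of fun i j : Fin p => M ⟨i.1, by have := i.isLt; omega⟩ ⟨j.1, by have := j.isLt; omega⟩).det *
            (Matrix.of fun i j : Fin q => M ⟨p + i.1, by have := i.isLt; omega⟩ ⟨p + j.1, by have := j.isLt; omega⟩).det := by
  set e : Fin p ⊕ Fin q ≃ Fin n := finSumFinEquiv.trans (finCongr hpq) with he
  have hval1 : ∀ x : Fin p, (e (Sum.inl x)).1 = x.1 := by
    intro x; simp [he]
  have hval2 : ∀ x : Fin q, (e (Sum.inr x)).1 = p + x.1 := by
    intro x; simp [he]
  rw [← Matrix.det_submatrix_equiv_self e M]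
  have hfb : M.submatrix e e = Matrix.fromBlocks
      (Matrix.of fun i j : Fin p => M ⟨i.1, by have := i.isLt; omega⟩ ⟨j.1, by have := j.isLt; omega⟩)
      0
      (Matrix.of fun (i : Fin q) (j : Fin p) => M (e (Sum.inr i)) (e (Sum.inl j)))
      (Matrix.of fun i j : Fin q => M ⟨p + i.1, by have := i.isLt; omega⟩ ⟨p + j.1, by have := j.isLt; omega⟩) := by
    ext a b
    cases a with
    | inl a =>
      cases b with
      | inl b =>
        simp only [Matrix.submatrix_apply, Matrix.fromBlocks_apply₁₁, Matrix.of_apply]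
        congr 1 <;> exact Fin.ext (by simp [hval1])
      | inr b =>
        simp only [Matrix.submatrix_apply, Matrix.fromBlocks_apply₁₂, Matrix.zero_apply]
        exact hz _ _ (by rw [hval1]; exact a.isLt) (by rw [hval2]; omega)
    | inr a =>
      cases b with
      | inl b =>
        simp only [Matrix.submatrix_apply, Matrix.fromBlocks_apply₂₁, Matrix.of_apply]
      | inr b =>
        simp only [Matrix.submatrix_apply, Matrix.fromBlocks_apply₂₂, Matrix.of_apply]
        congr 1 <;> exact Fin.ext (by simp [hval2])
  rw [hfb, Matrix.det_fromBlocks_zero₁₂]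

set_option maxHeartbeats 1000000 in
lemma chiA_succ (k : ℕ) (l : ℝ) :
    chiA (k+1) l = (chiA k l)^2 - (phiA k l)^2 := by
  have hp := pow_succ_two k
  have hm : 1 ≤ (2:ℕ)^k := Nat.one_le_two_pow
  rw [chiA]
  have h0 : (0:ℕ) < 2^(k+1) := by omega
  have hNN : 2^(k+1) - 1 < 2^(k+1) := by omega
  have hjm : (2:ℕ)^k < 2^(k+1) := by omega
  have hjm1 : (2:ℕ)^k - 1 < 2^(k+1) := by omega
  set M := Tmat (k+1) l with hM
  set i0 : Fin (2^(k+1)) := ⟨0, h0⟩ with hi0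
  set iN : Fin (2^(k+1)) := ⟨2^(k+1) - 1, hNN⟩ with hiN
  have hne : iN ≠ i0 := by
    rw [hi0, hiN, Ne, Fin.ext_iff]; simp only [finvmk]; omega
  set R0 : Fin (2^(k+1)) → ℝ := fun j => if j.1 < 2^k then M i0 j else 0 with hR0
  set RN : Fin (2^(k+1)) → ℝ := fun j => if 2^k ≤ j.1 then M iN j else 0 with hRN
  set S0 : Fin (2^(k+1)) → ℝ := Pi.single ⟨2^k, hjm⟩ 1 with hS0
  set SN : Fin (2^(k+1)) → ℝ := Pi.single ⟨2^k - 1, hjm1⟩ 1 with hSN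
  -- entry formula for doubly-updated matrices
  have hE : ∀ (u v : Fin (2^(k+1)) → ℝ) (x y : Fin (2^(k+1))),
      ((M.updateRow i0 u).updateRow iN v) x y
        = if x = iN then v y else if x = i0 then u y else M x y := by
    intro u v x y
    rw [Matrix.updateRow_apply, Matrix.updateRow_apply]
  have hC : ∀ (u v : Fin (2^(k+1)) → ℝ) (x y x' y' : Fin (2^(k+1))), x.1 = x'.1 → y.1 = y'.1 →
      ((M.updateRow i0 u).updateRow iN v) x y = ((M.updateRow i0 u).updateRow iN v) x' y' := by
    intro u v x y x' y' hx hy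
    rw [Fin.ext hx, Fin.ext hy]
  -- the two row decompositions
  have hrow0 : M i0 = R0 + S0 := by
    funext j
    have hj := j.isLt
    simp only [hR0, hS0, Pi.add_apply, Pi.single_apply]
    rcases Nat.lt_or_ge j.1 (2^k) with h | h
    · rw [if_pos h, if_neg (show ¬ j = ⟨2^k, hjm⟩ from fun hc => by
        have := congrArg Fin.val hc; simp only [finvmk] at this; omega), add_zero]
    · rw [if_neg (by omega), zero_add, hM, hi0, Tmat_12 l _ _ (show (0:ℕ) < 2^k from hm) h]
      simp only [finvmk, Fin.ext_iff, eq_self_iff_true, true_and]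
  have hrowN : M iN = RN + SN := by
    funext j
    have hj := j.isLt
    simp only [hRN, hSN, Pi.add_apply, Pi.single_apply]
    rcases Nat.lt_or_ge j.1 (2^k) with h | h
    · rw [if_neg (by omega), zero_add, hM, hiN,
        Tmat_21 l _ _ (show 2^k ≤ 2^(k+1) - 1 by omega) h]
      simp only [finvmk, Fin.ext_iff, eq_self_iff_true, true_and]
    · rw [if_pos h, if_neg (show ¬ j = ⟨2^k - 1, hjm1⟩ from fun hc => by
        have := congrArg Fin.val hc; simp only [finvmk] at this; omega), add_zero]
  have hdet1 : M.det = (M.updateRow i0 R0).det + (M.updateRow i0 S0).det := by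
    conv_lhs => rw [← Matrix.updateRow_eq_self M i0, hrow0]
    exact Matrix.det_updateRow_add _ _ _ _
  have hdet2 : ∀ u : Fin (2^(k+1)) → ℝ, (M.updateRow i0 u).det
      = ((M.updateRow i0 u).updateRow iN RN).det + ((M.updateRow i0 u).updateRow iN SN).det := by
    intro u
    conv_lhs => rw [← Matrix.updateRow_eq_self (M.updateRow i0 u) iN,
      Matrix.updateRow_ne hne, hrowN]
    exact Matrix.det_updateRow_add _ _ _ _
  -- term (a,a)
  have daa : ((M.updateRow i0 R0).updateRow iN RN).det = (chiA k l) * (chiA k l) := by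
    rw [det_split (p := 2^k) (q := 2^k) (by omega) _ ?hzaa]
    case hzaa =>
      intro i j hge hlt
      have hi := i.isLt
      rw [hE]
      split_ifs with h1 h2
      · rw [hRN]; simp only []; rw [if_neg (show ¬ 2^k ≤ j.1 by omega)]
      · exfalso
        have := congrArg Fin.val h2; simp only [hi0, finvmk] at this; omega
      · rw [hM]
        exact Tmat_21_ne l _ _ hge hlt (fun hc => h1 (Fin.ext (by simp only [hiN, finvmk]; exact hc)))
    rw [chiA]
    congr 1
    · refine congrArg Matrix.det ?_
      ext a b
      have ha := a.isLt
      have hb := b.isLt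
      simp only [Matrix.of_apply]
      rw [hE]
      split_ifs with h1 h2
      · exfalso
        have := congrArg Fin.val h1; simp only [hiN, finvmk] at this; omega
      · rw [hR0]; simp only []
        rw [if_pos (show (⟨b.1, by omega⟩ : Fin (2^(k+1))).1 < 2^k from hb), hM, hi0,
          Tmat_11 l _ _ (show (0:ℕ) < 2^k from hm) (show b.1 < 2^k from hb)]
        exact Tmat_congr
          (by simp only [finvmk]; have := congrArg Fin.val h2; simp only [hi0, finvmk] at this; omega)
          (by simp only [finvmk])
      · rw [hM]
        exact Tmat_11 l _ _ (show a.1 < 2^k from ha) (show b.1 < 2^k from hb)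
    · refine congrArg Matrix.det ?_
      ext a b
      have ha := a.isLt
      have hb := b.isLt
      simp only [Matrix.of_apply]
      rw [hE]
      split_ifs with h1 h2
      · rw [hRN]; simp only []
        rw [if_pos (show 2^k ≤ (⟨2^k + b.1, by omega⟩ : Fin (2^(k+1))).1 from Nat.le_add_right _ _),
          hM, hiN, Tmat_22 l _ _ (show 2^k ≤ 2^(k+1) - 1 by omega)
            (show 2^k ≤ 2^k + b.1 from Nat.le_add_right _ _)]
        exact Tmat_congr
          (by simp only [finvmk]; have := congrArg Fin.val h1; simp only [hiN, finvmk] at this; omega)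
          (by simp only [finvmk]; omega)
      · exfalso
        have := congrArg Fin.val h2; simp only [hi0, finvmk] at this; omega
      · rw [hM, Tmat_22 l _ _ (show 2^k ≤ 2^k + a.1 from Nat.le_add_right _ _)
          (show 2^k ≤ 2^k + b.1 from Nat.le_add_right _ _)]
        exact Tmat_congr (by simp only [finvmk]; omega) (by simp only [finvmk]; omega)
  -- term (a,b) : zero
  have dab : ((M.updateRow i0 R0).updateRow iN SN).det = 0 := by
    rw [det_split' (p := 2^k) (q := 2^k) (by omega) _ ?hzab]
    case hzab =>
      intro i j hlt hge
      have hi := i.isLt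
      rw [hE]
      split_ifs with h1 h2
      · exfalso
        have := congrArg Fin.val h1; simp only [hiN, finvmk] at this; omega
      · rw [hR0]; simp only []; rw [if_neg (show ¬ (⟨j.1, by have := j.isLt; omega⟩ : Fin (2^(k+1))).1 < 2^k by simp only [finvmk]; omega)]
      · rw [hM]
        exact Tmat_12_ne l _ _ hlt hge (fun hc => h2 (Fin.ext (by simp only [hi0, finvmk]; exact hc.1)))
    have : (Matrix.of fun i j : Fin (2^k) =>
        ((M.updateRow i0 R0).updateRow iN SN) ⟨2^k + i.1, by have := i.isLt; omega⟩
          ⟨2^k + j.1, by have := j.isLt; omega⟩).det = 0 := by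
      apply Matrix.det_eq_zero_of_row_eq_zero ⟨2^k - 1, by omega⟩
      intro j
      have hj := j.isLt
      simp only [Matrix.of_apply]
      rw [hE, if_pos (Fin.ext (by simp only [hiN, finvmk]; omega)), hSN, Pi.single_apply,
        if_neg (show ¬ (⟨2^k + j.1, by omega⟩ : Fin (2^(k+1))) = ⟨2^k - 1, hjm1⟩ from fun hc => by
          have := congrArg Fin.val hc; simp only [finvmk] at this; omega)]
    rw [this, mul_zero]
  -- term (b,a) : zero
  have dba : ((M.updateRow i0 S0).updateRow iN RN).det = 0 := by
    rw [det_split (p := 2^k) (q := 2^k) (by omega) _ ?hzba]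
    case hzba =>
      intro i j hge hlt
      have hi := i.isLt
      rw [hE]
      split_ifs with h1 h2
      · rw [hRN]; simp only []; rw [if_neg (show ¬ 2^k ≤ j.1 by omega)]
      · exfalso
        have := congrArg Fin.val h2; simp only [hi0, finvmk] at this; omega
      · rw [hM]
        exact Tmat_21_ne l _ _ hge hlt (fun hc => h1 (Fin.ext (by simp only [hiN, finvmk]; exact hc)))
    have : (Matrix.of fun i j : Fin (2^k) =>
        ((M.updateRow i0 S0).updateRow iN RN) ⟨i.1, by have := i.isLt; omega⟩
          ⟨j.1, by have := j.isLt; omega⟩).det = 0 := by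
      apply Matrix.det_eq_zero_of_row_eq_zero ⟨0, by omega⟩
      intro j
      have hj := j.isLt
      simp only [Matrix.of_apply]
      rw [hE, if_neg (fun hc => by have := congrArg Fin.val hc; simp only [finvmk] at this; omega),
        if_pos (Fin.ext (by simp only [hi0, finvmk])), hS0, Pi.single_apply,
        if_neg (show ¬ (⟨j.1, by omega⟩ : Fin (2^(k+1))) = ⟨2^k, hjm⟩ from fun hc => by
          have := congrArg Fin.val hc; simp only [finvmk] at this; omega)]
    rw [this, zero_mul]
  -- term (b,b)
  have dbb : ((M.updateRow i0 S0).updateRow iN SN).det = -(phiA k l * phiA' k l) := by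
    have hUrow0 : ((M.updateRow i0 S0).updateRow iN SN) i0 = Pi.single ⟨2^k, hjm⟩ 1 := by
      funext j
      rw [hE, if_neg (Ne.symm hne), if_pos rfl, hS0]
    rw [det_row_single _ i0 ⟨2^k, hjm⟩ hUrow0]
    have hD1 : dropMinor ((M.updateRow i0 S0).updateRow iN SN) i0 ⟨2^k, hjm⟩
        = Matrix.of (fun a b : Fin (2^(k+1) - 1) =>
          ((M.updateRow i0 S0).updateRow iN SN) ⟨a.1 + 1, by have := a.isLt; omega⟩
            ⟨if b.1 < 2^k then b.1 else b.1 + 1, by have := b.isLt; split_ifs <;> omega⟩) := by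
      ext a b
      have ha := a.isLt
      have hb := b.isLt
      simp only [dropMinor, Matrix.of_apply]
      exact hC S0 SN _ _ _ _
        (by simp only [hi0, finvmk]; try (split_ifs <;> omega); try omega)
        (by simp only [finvmk]; try (split_ifs <;> omega); try omega)
    rw [hD1]
    have hD1row : (Matrix.of (fun a b : Fin (2^(k+1) - 1) =>
          ((M.updateRow i0 S0).updateRow iN SN) ⟨a.1 + 1, by have := a.isLt; omega⟩
            ⟨if b.1 < 2^k then b.1 else b.1 + 1, by have := b.isLt; split_ifs <;> omega⟩))
          ⟨2^(k+1) - 2, by omega⟩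
        = Pi.single (⟨2^k - 1, by omega⟩ : Fin (2^(k+1) - 1)) 1 := by
      funext b
      have hb := b.isLt
      simp only [Matrix.of_apply]
      refine (hC S0 SN _ _ iN ⟨if b.1 < 2^k then b.1 else b.1 + 1, by split_ifs <;> omega⟩
        (by simp only [hiN, finvmk]; omega) rfl).trans ?_
      rw [hE, if_pos rfl, hSN]
      simp only [Pi.single_apply, Fin.ext_iff, finvmk]
      split_ifs <;> first | rfl | omega
    rw [det_row_single _ ⟨2^(k+1) - 2, by omega⟩ ⟨2^k - 1, by omega⟩ hD1row]
    have hD2 : dropMinor (Matrix.of (fun a b : Fin (2^(k+1) - 1) =>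
          ((M.updateRow i0 S0).updateRow iN SN) ⟨a.1 + 1, by have := a.isLt; omega⟩
            ⟨if b.1 < 2^k then b.1 else b.1 + 1, by have := b.isLt; split_ifs <;> omega⟩))
          ⟨2^(k+1) - 2, by omega⟩ ⟨2^k - 1, by omega⟩
        = Matrix.of (fun a b : Fin (2^(k+1) - 2) =>
          ((M.updateRow i0 S0).updateRow iN SN) ⟨a.1 + 1, by have := a.isLt; omega⟩
            ⟨if b.1 < 2^k - 1 then b.1 else b.1 + 2, by have := b.isLt; split_ifs <;> omega⟩) := by
      ext a b
      have ha := a.isLt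
      have hb := b.isLt
      simp only [dropMinor, Matrix.of_apply]
      exact hC S0 SN _ _ _ _
        (by simp only [finvmk]; split_ifs <;> omega)
        (by simp only [finvmk]; split_ifs <;> omega)
    rw [hD2]
    rw [det_split (p := 2^k - 1) (q := 2^k - 1) (by omega) _ ?hzbb]
    case hzbb =>
      intro i j hge hlt
      have hi := i.isLt
      have hj := j.isLt
      simp only [Matrix.of_apply]
      refine (hC S0 SN _ _ ⟨i.1 + 1, by omega⟩ ⟨j.1, by omega⟩
        (by simp only [finvmk]) (by simp only [finvmk]; split_ifs <;> omega)).trans ?_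
      rw [hE,
        if_neg (fun hc => by have := congrArg Fin.val hc; simp only [hiN, finvmk] at this; omega),
        if_neg (fun hc => by have := congrArg Fin.val hc; simp only [hi0, finvmk] at this; omega),
        hM]
      exact Tmat_21_ne l _ _ (show 2^k ≤ i.1 + 1 by omega) (show j.1 < 2^k by omega)
        (show i.1 + 1 ≠ 2^(k+1) - 1 by omega)
    have hTL : (Matrix.of (fun i j : Fin (2^k - 1) =>
          (Matrix.of (fun a b : Fin (2^(k+1) - 2) =>
            ((M.updateRow i0 S0).updateRow iN SN) ⟨a.1 + 1, by have := a.isLt; omega⟩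
              ⟨if b.1 < 2^k - 1 then b.1 else b.1 + 2, by have := b.isLt; split_ifs <;> omega⟩))
            ⟨i.1, by have := i.isLt; omega⟩ ⟨j.1, by have := j.isLt; omega⟩)).det = phiA k l := by
      rw [phiA]
      refine congrArg Matrix.det ?_
      ext a b
      have ha := a.isLt
      have hb := b.isLt
      simp only [Matrix.of_apply]
      refine (hC S0 SN _ _ ⟨a.1 + 1, by omega⟩ ⟨b.1, by omega⟩
        (by simp only [finvmk]) (by simp only [finvmk]; split_ifs <;> omega)).trans ?_
      rw [hE,
        if_neg (fun hc => by have := congrArg Fin.val hc; simp only [hiN, finvmk] at this; omega),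
        if_neg (fun hc => by have := congrArg Fin.val hc; simp only [hi0, finvmk] at this; omega),
        hM, Tmat_11 l _ _ (show a.1 + 1 < 2^k by omega) (show b.1 < 2^k by omega)]
      exact Tmat_congr (by simp only [finvmk]) (by simp only [finvmk])
    have hBR : (Matrix.of (fun i j : Fin (2^k - 1) =>
          (Matrix.of (fun a b : Fin (2^(k+1) - 2) =>
            ((M.updateRow i0 S0).updateRow iN SN) ⟨a.1 + 1, by have := a.isLt; omega⟩
              ⟨if b.1 < 2^k - 1 then b.1 else b.1 + 2, by have := b.isLt; split_ifs <;> omega⟩))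
            ⟨2^k - 1 + i.1, by have := i.isLt; omega⟩
            ⟨2^k - 1 + j.1, by have := j.isLt; omega⟩)).det = phiA' k l := by
      rw [phiA']
      refine congrArg Matrix.det ?_
      ext a b
      have ha := a.isLt
      have hb := b.isLt
      simp only [Matrix.of_apply]
      refine (hC S0 SN _ _ ⟨2^k + a.1, by omega⟩ ⟨2^k + (b.1 + 1), by omega⟩
        (by simp only [finvmk]; omega) (by simp only [finvmk]; split_ifs <;> omega)).trans ?_
      rw [hE,
        if_neg (fun hc => by have := congrArg Fin.val hc; simp only [hiN, finvmk] at this; omega),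
        if_neg (fun hc => by have := congrArg Fin.val hc; simp only [hi0, finvmk] at this; omega),
        hM, Tmat_22 l _ _ (show 2^k ≤ 2^k + a.1 from Nat.le_add_right _ _)
          (show 2^k ≤ 2^k + (b.1 + 1) from Nat.le_add_right _ _)]
      exact Tmat_congr (by simp only [finvmk]; omega) (by simp only [finvmk]; omega)
    rw [hTL, hBR]
    simp only [hi0, finvmk]
    obtain ⟨c, hc⟩ : ∃ c, (0 + 2^k) + ((2^(k+1) - 2) + (2^k - 1)) = 2*c + 1 :=
      ⟨2^(k+1) - 2, by omega⟩
    rw [← mul_assoc, ← pow_add, hc, pow_succ, pow_mul, neg_one_sq, one_pow, one_mul]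
    ring
  rw [hdet1, hdet2 R0, hdet2 S0, daa, dab, dba, dbb, phiA'_eq]
  ring


section Chebyshev

noncomputable def chebU (x : ℝ) (n : ℕ) : ℝ := (Polynomial.Chebyshev.U ℝ (n : ℤ)).eval x

lemma chebU_zero (x : ℝ) : chebU x 0 = 1 := by
  simp [chebU, Polynomial.Chebyshev.U_zero]

lemma chebU_one (x : ℝ) : chebU x 1 = 2 * x := by
  simp [chebU, Polynomial.Chebyshev.U_one]

lemma chebU_rec (x : ℝ) (n : ℕ) : chebU x (n + 2) = 2 * x * chebU x (n + 1) - chebU x n := by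
  have h := Polynomial.Chebyshev.U_add_two ℝ (n : ℤ)
  have h2 : ((n : ℤ) + 2) = ((n + 2 : ℕ) : ℤ) := by push_cast; ring
  have h1 : ((n : ℤ) + 1) = ((n + 1 : ℕ) : ℤ) := by push_cast; ring
  rw [h2, h1] at h
  have := congrArg (Polynomial.eval x) h
  simpa [chebU] using this

lemma chebU_turan (x : ℝ) (n : ℕ) :
    (chebU x (n + 1))^2 - chebU x n * chebU x (n + 2) = 1 := by
  induction n with
  | zero =>
    rw [chebU_rec x 0, chebU_zero, chebU_one]
    ring
  | succ n ih =>
    have h3 : chebU x (n + 3) = 2 * x * chebU x (n + 2) - chebU x (n + 1) := chebU_rec x (n + 1)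
    have h2 : chebU x (n + 2) = 2 * x * chebU x (n + 1) - chebU x n := chebU_rec x n
    show chebU x (n + 2)^2 - chebU x (n + 1) * chebU x (n + 3) = 1
    rw [h3]
    linear_combination ih + chebU x (n + 2) * h2

noncomputable def Pprod (x : ℝ) (N : ℕ) : ℝ := ∏ i ∈ Finset.range N, (chebU x i)^(2^(N - 1 - i))

lemma Pprod_zero (x : ℝ) : Pprod x 0 = 1 := by simp [Pprod]

lemma Pprod_succ (x : ℝ) (N : ℕ) : Pprod x (N + 1) = chebU x N * (Pprod x N)^2 := by
  rw [Pprod, Finset.prod_range_succ, Pprod]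
  have h1 : (N + 1) - 1 - N = 0 := by omega
  rw [h1, pow_zero, pow_one]
  have h2 : ∀ i ∈ Finset.range N, (chebU x i)^(2^(N + 1 - 1 - i))
      = ((chebU x i)^(2^(N - 1 - i)))^2 := by
    intro i hi
    rw [Finset.mem_range] at hi
    rw [← pow_mul]
    congr 1
    have : N + 1 - 1 - i = (N - 1 - i) + 1 := by omega
    rw [this, pow_succ]
  rw [Finset.prod_congr rfl h2, ← Finset.prod_pow]
  ring

lemma main_induction (N : ℕ) (l : ℝ) :
    chiA N l = chebU (-l/2) (N + 1) * Pprod (-l/2) N ∧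
    psiA N l = chebU (-l/2) N * Pprod (-l/2) N ∧
    (phiA N l)^2 = (Pprod (-l/2) N)^2 := by
  induction N with
  | zero =>
    refine ⟨?_, ?_, ?_⟩
    · rw [chiA_zero, chebU_one, Pprod_zero]; ring
    · rw [psiA_zero, chebU_zero, Pprod_zero]; ring
    · rw [phiA_zero, Pprod_zero]
  | succ N ih =>
    obtain ⟨hchi, hpsi, hphi⟩ := ih
    have hP := Pprod_succ (-l/2) N
    have hrec : chebU (-l/2) (N + 2) = 2 * (-l/2) * chebU (-l/2) (N + 1) - chebU (-l/2) N :=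
      chebU_rec _ _
    have hturan := chebU_turan (-l/2) N
    refine ⟨?_, ?_, ?_⟩
    · rw [chiA_succ, hchi, hP]
      nlinarith [hturan, hphi]
    · rw [psiA_succ, hchi, hpsi, hP]
      ring
    · rw [phiA_succ_sq, mul_pow, hphi, hpsi, hP]
      ring

end Chebyshev

/-- The characteristic polynomial of `A_N` equals
`χ_N(λ) = U_{N+1}(-λ/2) * ∏_{i=0}^{N-1} (U_i(-λ/2))^(2^(N-i-1))` for all `N ≥ 1`. -/
theorem chiA_eq_chebyshev (N : ℕ) (hN : 1 ≤ N) (l : ℝ) :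
    chiA N l = (Polynomial.Chebyshev.U ℝ (N + 1)).eval (-l / 2) *
      ∏ i ∈ Finset.range N, ((Polynomial.Chebyshev.U ℝ i).eval (-l / 2)) ^ (2 ^ (N - i - 1)) := by
  have h := (main_induction N l).1
  rw [h]
  have e1 : chebU (-l/2) (N + 1) = (Polynomial.Chebyshev.U ℝ (N + 1)).eval (-l / 2) := by
    unfold chebU
    norm_cast
  have e2 : Pprod (-l/2) N
      = ∏ i ∈ Finset.range N, ((Polynomial.Chebyshev.U ℝ i).eval (-l / 2)) ^ (2 ^ (N - i - 1)) := by
    unfold Pprod chebU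
    refine Finset.prod_congr rfl fun i hi => ?_
    have hni : N - 1 - i = N - i - 1 := by omega
    rw [hni]
  rw [e1, e2]
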